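/- Order interleaving of left and right q-deformed rationals: for every real q with 0 < q < 1 and all rational numbers x < y, one has [x]♭_q < [x]♯_q < [y]♭_q < [y]♯_q. In particular, x ↦ [x]♯_q and x ↦ [x]♭_q are strictly increasing on ℚ, and for each rational x the left q-deformation is strictly smaller than the right q-deformation. -/

import Mathlib

open Matrix Filter

/-- The q-deformed generator σ₁(q) = [[q⁻¹, −q⁻¹], [0, 1]]. -/
noncomputable def sig1 (q : ℝ) : Matrix (Fin 2) (Fin 2) ℝ := !![q⁻¹, -q⁻¹; 0, 1]

/-- The q-deformed generator σ₂(q) = [[1, 0], [1, q⁻¹]]. -/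
noncomputable def sig2 (q : ℝ) : Matrix (Fin 2) (Fin 2) ℝ := !![1, 0; 1, q⁻¹]

/-- `betaMat q a k` is the product of the first `k` alternating factors
`σ₁(q)^{-a 1} · σ₂(q)^{a 2} · σ₁(q)^{-a 3} ⋯` (indices start at 1). -/
noncomputable def betaMat (q : ℝ) (a : ℕ → ℤ) : ℕ → Matrix (Fin 2) (Fin 2) ℝ
  | 0 => 1
  | k + 1 => betaMat q a k *
      (if (k + 1) % 2 = 1 then sig1 q ^ (-(a (k + 1))) else sig2 q ^ (a (k + 1)))

/-- Möbius action of a 2×2 real matrix on a real number: z ↦ (Az + B)/(Cz + D). -/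
noncomputable def mobiusAct (M : Matrix (Fin 2) (Fin 2) ℝ) (z : ℝ) : ℝ :=
  (M 0 0 * z + M 0 1) / (M 1 0 * z + M 1 1)

/-- Möbius image of ∞ under a 2×2 real matrix: ∞ ↦ A/C. -/
noncomputable def mobiusInf (M : Matrix (Fin 2) (Fin 2) ℝ) : ℝ := M 0 0 / M 1 0

/-- `a` (on indices 1,…,2n) is an even continued form: either `a₁ ≥ 0` and `aᵢ ≥ 1` for
`2 ≤ i ≤ 2n`, or `a₁ ≤ 0` and `aᵢ ≤ −1` for `2 ≤ i ≤ 2n`. -/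
def IsEvenForm (n : ℕ) (a : ℕ → ℤ) : Prop :=
  1 ≤ n ∧ ((0 ≤ a 1 ∧ ∀ i, 2 ≤ i → i ≤ 2 * n → 1 ≤ a i)
    ∨ (a 1 ≤ 0 ∧ ∀ i, 2 ≤ i → i ≤ 2 * n → a i ≤ -1))

/-- Value of the continued fraction `a i + 1/(a (i+1) + 1/(⋯ + 1/(a last)))`. -/
def cfVal (a : ℕ → ℤ) (last i : ℕ) : ℚ :=
  if last ≤ i then (a i : ℚ)
  else (a i : ℚ) + 1 / cfVal a last (i + 1)
termination_by last - i
decreasing_by omega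

/-- `a` (on indices 1,…,2n) is the even continued fraction expansion of the rational `x`:
for `x ≠ 0` it is an even continued form of value `x`; by convention the expansion of `0`
is `(−1, 1)`. -/
def IsECFExp (n : ℕ) (a : ℕ → ℤ) (x : ℚ) : Prop :=
  (x ≠ 0 ∧ IsEvenForm n a ∧ cfVal a (2 * n) 1 = x) ∨
  (x = 0 ∧ n = 1 ∧ a 1 = -1 ∧ a 2 = 1)

/-- The right q-deformation attached to expansion data `(n, a)`:
the image of ∞ under the Möbius transformation of β(a, q). -/
noncomputable def sharpVal (q : ℝ) (n : ℕ) (a : ℕ → ℤ) : ℝ :=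
  mobiusInf (betaMat q a (2 * n))

/-- The left q-deformation attached to expansion data `(n, a)`:
the image of 1/(1−q) under the Möbius transformation of β(a, q). -/
noncomputable def flatVal (q : ℝ) (n : ℕ) (a : ℕ → ℤ) : ℝ :=
  mobiusAct (betaMat q a (2 * n)) (1 / (1 - q))


/-! ### Auxiliary development -/

namespace QD

/-- letters -/
inductive Ltr | R | L
deriving DecidableEq

open Ltr

/-- action of a 2×2 matrix on a pair (projective coordinates) -/
def act (M : Matrix (Fin 2) (Fin 2) ℝ) (v : ℝ × ℝ) : ℝ × ℝ :=
  (M 0 0 * v.1 + M 0 1 * v.2, M 1 0 * v.1 + M 1 1 * v.2)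

def cross (v w : ℝ × ℝ) : ℝ := v.1 * w.2 - w.1 * v.2

lemma act_mul (M N : Matrix (Fin 2) (Fin 2) ℝ) (v : ℝ × ℝ) :
    act (M * N) v = act M (act N v) := by
  simp only [act, Matrix.mul_apply, Fin.sum_univ_two]
  exact Prod.ext (by ring) (by ring)

/-- positive letter matrices -/
noncomputable def pm (q : ℝ) : Ltr → Matrix (Fin 2) (Fin 2) ℝ
  | R => !![q, 1; 0, 1]
  | L => !![1, 0; 1, q⁻¹]

/-- negative letter matrices -/
noncomputable def nm (q : ℝ) : Ltr → Matrix (Fin 2) (Fin 2) ℝ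
  | R => !![q⁻¹, -q⁻¹; 0, 1]
  | L => !![1, 0; -q, q]

/-- word product -/
noncomputable def wp (m : Ltr → Matrix (Fin 2) (Fin 2) ℝ) : List Ltr → Matrix (Fin 2) (Fin 2) ℝ
  | [] => 1
  | c :: w => m c * wp m w

lemma wp_nil (m) : wp m [] = 1 := rfl
lemma wp_cons (m) (c) (w) : wp m (c :: w) = m c * wp m w := rfl

lemma wp_append (m) (u v : List Ltr) : wp m (u ++ v) = wp m u * wp m v := by
  induction u with
  | nil => simp [wp]
  | cons c u ih => simp [wp, ih, mul_assoc]

lemma wp_replicate (m) (c) (s : ℕ) : wp m (List.replicate s c) = m c ^ s := by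
  induction s with
  | zero => simp [wp]
  | succ s ih => rw [List.replicate_succ, wp_cons, ih, pow_succ']

lemma act_one (v : ℝ × ℝ) : act 1 v = v := by
  simp [act, Matrix.one_apply]

/-- concrete actions -/
lemma act_pmR (q : ℝ) (v : ℝ × ℝ) : act (pm q R) v = (q * v.1 + v.2, v.2) := by
  simp [act, pm]
lemma act_pmL (q : ℝ) (v : ℝ × ℝ) : act (pm q L) v = (v.1, v.1 + q⁻¹ * v.2) := by
  simp [act, pm]
lemma act_nmR (q : ℝ) (v : ℝ × ℝ) : act (nm q R) v = (q⁻¹ * v.1 + -q⁻¹ * v.2, v.2) := by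
  simp [act, nm]
lemma act_nmL (q : ℝ) (v : ℝ × ℝ) : act (nm q L) v = (v.1, -q * v.1 + q * v.2) := by
  simp [act, nm]

lemma cross_pm (q : ℝ) (hq : 0 < q) (c : Ltr) :
    ∃ d : ℝ, 0 < d ∧ ∀ v w, cross (act (pm q c) v) (act (pm q c) w) = d * cross v w := by
  cases c
  · exact ⟨q, hq, fun v w => by simp only [act_pmR, cross]; ring⟩
  · exact ⟨q⁻¹, inv_pos.mpr hq, fun v w => by simp only [act_pmL, cross]; ring⟩

lemma cross_nm (q : ℝ) (hq : 0 < q) (c : Ltr) :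
    ∃ d : ℝ, 0 < d ∧ ∀ v w, cross (act (nm q c) v) (act (nm q c) w) = d * cross v w := by
  cases c
  · exact ⟨q⁻¹, inv_pos.mpr hq, fun v w => by simp only [act_nmR, cross]; ring⟩
  · exact ⟨q, hq, fun v w => by simp only [act_nmL, cross]; ring⟩

lemma cross_wp (m : Ltr → Matrix (Fin 2) (Fin 2) ℝ)
    (hm : ∀ c : Ltr, ∃ d : ℝ, 0 < d ∧ ∀ v w, cross (act (m c) v) (act (m c) w) = d * cross v w)
    (u : List Ltr) :
    ∃ d : ℝ, 0 < d ∧ ∀ v w, cross (act (wp m u) v) (act (wp m u) w) = d * cross v w := by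
  induction u with
  | nil => exact ⟨1, one_pos, fun v w => by rw [wp_nil, act_one, act_one, one_mul]⟩
  | cons c u ih =>
    obtain ⟨d, hd, hdw⟩ := ih
    obtain ⟨e, he, hew⟩ := hm c
    refine ⟨e * d, mul_pos he hd, fun v w => ?_⟩
    rw [wp_cons, act_mul, act_mul, hew, hdw, mul_assoc]

/-! ### lexicographic orders with R^ω padding -/

def ltP : List Ltr → List Ltr → Prop
  | [], [] => False
  | [], (R :: v) => ltP [] v
  | [], (L :: _) => False
  | (R :: u), [] => ltP u []
  | (L :: _), [] => True
  | (R :: u), (R :: v) => ltP u v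
  | (L :: u), (L :: v) => ltP u v
  | (L :: _), (R :: _) => True
  | (R :: _), (L :: _) => False
termination_by u v => u.length + v.length

def ltN : List Ltr → List Ltr → Prop
  | [], [] => False
  | [], (R :: v) => ltN [] v
  | [], (L :: _) => True
  | (R :: u), [] => ltN u []
  | (L :: _), [] => False
  | (R :: u), (R :: v) => ltN u v
  | (L :: u), (L :: v) => ltN u v
  | (L :: _), (R :: _) => False
  | (R :: _), (L :: _) => True
termination_by u v => u.length + v.length

def endsL : List Ltr → Prop
  | [] => False
  | [L] => True
  | [R] => False
  | _ :: u => endsL u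

lemma endsL_cons (c : Ltr) (w : List Ltr) (hw : w ≠ []) : endsL (c :: w) = endsL w := by
  cases w with
  | nil => exact absurd rfl hw
  | cons d w' => cases c <;> rfl

lemma endsL_append (u v : List Ltr) (hv : endsL v) : endsL (u ++ v) := by
  induction u with
  | nil => exact hv
  | cons c u ih =>
    have hne : u ++ v ≠ [] := by
      cases v with
      | nil => exact absurd hv (by simp [endsL])
      | cons d v' => simp
    rw [List.cons_append, endsL_cons c _ hne]
    exact ih

lemma endsL_replicate (s : ℕ) (hs : 1 ≤ s) : endsL (List.replicate s L) := by
  induction s with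
  | zero => omega
  | succ s ih =>
    rw [List.replicate_succ]
    rcases Nat.eq_zero_or_pos s with h | h
    · subst h; exact trivial
    · rw [endsL_cons _ _ (by simp; omega)]
      exact ih h

lemma not_ltP_nil (v : List Ltr) : ¬ ltP [] v := by
  induction v with
  | nil => simp [ltP]
  | cons c v ih => cases c <;> simp [ltP] <;> exact ih

lemma ltP_nil_of_endsL (v : List Ltr) (hv : endsL v) : ltP v [] := by
  induction v with
  | nil => exact absurd hv (by simp [endsL])
  | cons c v ih =>
    cases v with
    | nil =>
      cases c
      · exact absurd hv (by simp [endsL])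
      · simp [ltP]
    | cons d v' =>
      rw [endsL_cons _ _ (by simp)] at hv
      cases c
      · simpa [ltP] using ih hv
      · simp [ltP]

lemma not_ltN_nil (v : List Ltr) : ¬ ltN v [] := by
  induction v with
  | nil => simp [ltN]
  | cons c v ih => cases c <;> simp [ltN] <;> exact ih

lemma ltN_nil_of_endsL (v : List Ltr) (hv : endsL v) : ltN [] v := by
  induction v with
  | nil => exact absurd hv (by simp [endsL])
  | cons c v ih =>
    cases v with
    | nil =>
      cases c
      · exact absurd hv (by simp [endsL])
      · simp [ltN]
    | cons d v' =>
      rw [endsL_cons _ _ (by simp)] at hv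
      cases c
      · simpa [ltN] using ih hv
      · simp [ltN]

lemma triP : ∀ N u v, u.length + v.length ≤ N → (u = [] ∨ endsL u) → (v = [] ∨ endsL v) →
    ltP u v ∨ ltP v u ∨ u = v := by
  intro N
  induction N with
  | zero =>
    intro u v hlen _ _
    have : u = [] ∧ v = [] := by
      constructor <;> (apply List.eq_nil_of_length_eq_zero; omega)
    simp [this.1, this.2]
  | succ N ih =>
    intro u v hlen hu hv
    match u, v with
    | [], [] => simp
    | [], (c :: v') =>
      have hv' : endsL (c :: v') := hv.resolve_left (by simp)
      exact Or.inr (Or.inl (ltP_nil_of_endsL _ hv'))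
    | (c :: u'), [] =>
      have hu' : endsL (c :: u') := hu.resolve_left (by simp)
      exact Or.inl (ltP_nil_of_endsL _ hu')
    | (R :: u'), (R :: v') =>
      have hu' : u' = [] ∨ endsL u' := by
        cases u' with
        | nil => exact Or.inl rfl
        | cons d u'' =>
          right
          have := hu.resolve_left (by simp)
          rwa [endsL_cons _ _ (by simp)] at this
      have hv' : v' = [] ∨ endsL v' := by
        cases v' with
        | nil => exact Or.inl rfl
        | cons d v'' =>
          right
          have := hv.resolve_left (by simp)
          rwa [endsL_cons _ _ (by simp)] at this
      rcases ih u' v' (by simp at hlen ⊢; omega) hu' hv' with h | h | h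
      · exact Or.inl (by simpa [ltP] using h)
      · exact Or.inr (Or.inl (by simpa [ltP] using h))
      · exact Or.inr (Or.inr (by rw [h]))
    | (L :: u'), (L :: v') =>
      have hu' : u' = [] ∨ endsL u' := by
        cases u' with
        | nil => exact Or.inl rfl
        | cons d u'' =>
          right
          have := hu.resolve_left (by simp)
          rwa [endsL_cons _ _ (by simp)] at this
      have hv' : v' = [] ∨ endsL v' := by
        cases v' with
        | nil => exact Or.inl rfl
        | cons d v'' =>
          right
          have := hv.resolve_left (by simp)
          rwa [endsL_cons _ _ (by simp)] at this
      rcases ih u' v' (by simp at hlen ⊢; omega) hu' hv' with h | h | h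
      · exact Or.inl (by simpa [ltP] using h)
      · exact Or.inr (Or.inl (by simpa [ltP] using h))
      · exact Or.inr (Or.inr (by rw [h]))
    | (L :: u'), (R :: v') => exact Or.inl (by simp [ltP])
    | (R :: u'), (L :: v') => exact Or.inr (Or.inl (by simp [ltP]))

lemma triN : ∀ N u v, u.length + v.length ≤ N → (u = [] ∨ endsL u) → (v = [] ∨ endsL v) →
    ltN u v ∨ ltN v u ∨ u = v := by
  intro N
  induction N with
  | zero =>
    intro u v hlen _ _
    have : u = [] ∧ v = [] := by
      constructor <;> (apply List.eq_nil_of_length_eq_zero; omega)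
    simp [this.1, this.2]
  | succ N ih =>
    intro u v hlen hu hv
    match u, v with
    | [], [] => simp
    | [], (c :: v') =>
      have hv' : endsL (c :: v') := hv.resolve_left (by simp)
      exact Or.inl (ltN_nil_of_endsL _ hv')
    | (c :: u'), [] =>
      have hu' : endsL (c :: u') := hu.resolve_left (by simp)
      exact Or.inr (Or.inl (ltN_nil_of_endsL _ hu'))
    | (R :: u'), (R :: v') =>
      have hu' : u' = [] ∨ endsL u' := by
        cases u' with
        | nil => exact Or.inl rfl
        | cons d u'' =>
          right
          have := hu.resolve_left (by simp)
          rwa [endsL_cons _ _ (by simp)] at this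
      have hv' : v' = [] ∨ endsL v' := by
        cases v' with
        | nil => exact Or.inl rfl
        | cons d v'' =>
          right
          have := hv.resolve_left (by simp)
          rwa [endsL_cons _ _ (by simp)] at this
      rcases ih u' v' (by simp at hlen ⊢; omega) hu' hv' with h | h | h
      · exact Or.inl (by simpa [ltN] using h)
      · exact Or.inr (Or.inl (by simpa [ltN] using h))
      · exact Or.inr (Or.inr (by rw [h]))
    | (L :: u'), (L :: v') =>
      have hu' : u' = [] ∨ endsL u' := by
        cases u' with
        | nil => exact Or.inl rfl
        | cons d u'' =>
          right
          have := hu.resolve_left (by simp)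
          rwa [endsL_cons _ _ (by simp)] at this
      have hv' : v' = [] ∨ endsL v' := by
        cases v' with
        | nil => exact Or.inl rfl
        | cons d v'' =>
          right
          have := hv.resolve_left (by simp)
          rwa [endsL_cons _ _ (by simp)] at this
      rcases ih u' v' (by simp at hlen ⊢; omega) hu' hv' with h | h | h
      · exact Or.inl (by simpa [ltN] using h)
      · exact Or.inr (Or.inl (by simpa [ltN] using h))
      · exact Or.inr (Or.inr (by rw [h]))
    | (L :: u'), (R :: v') => exact Or.inr (Or.inl (by simp [ltN]))
    | (R :: u'), (L :: v') => exact Or.inl (by simp [ltN])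


/-! ### concrete cross-ratio scalings -/

lemma crossPR (q : ℝ) (v w : ℝ × ℝ) :
    cross (act (pm q R) v) (act (pm q R) w) = q * cross v w := by
  simp only [act_pmR, cross]; ring
lemma crossPL (q : ℝ) (v w : ℝ × ℝ) :
    cross (act (pm q L) v) (act (pm q L) w) = q⁻¹ * cross v w := by
  simp only [act_pmL, cross]; ring
lemma crossNR (q : ℝ) (v w : ℝ × ℝ) :
    cross (act (nm q R) v) (act (nm q R) w) = q⁻¹ * cross v w := by
  simp only [act_nmR, cross]; ring
lemma crossNL (q : ℝ) (v w : ℝ × ℝ) :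
    cross (act (nm q L) v) (act (nm q L) w) = q * cross v w := by
  simp only [act_nmL, cross]; ring

lemma cross_inf (w : ℝ × ℝ) : cross ((1:ℝ), (0:ℝ)) w = w.2 := by simp [cross]

/-! ### invariants -/

/-- invariant for the positive letter system -/
lemma invP {q : ℝ} (hq0 : 0 < q) (x : ℝ × ℝ) (hx1 : 0 < x.1) (hx2 : 0 ≤ x.2) :
    ∀ u : List Ltr, 0 < (act (wp (pm q) u) x).1 ∧ 0 ≤ (act (wp (pm q) u) x).2 := by
  intro u
  induction u with
  | nil => rw [wp_nil, act_one]; exact ⟨hx1, hx2⟩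
  | cons c u ih =>
    obtain ⟨h1, h2⟩ := ih
    rw [wp_cons, act_mul]
    set v := act (wp (pm q) u) x with hv
    cases c
    · rw [act_pmR]; constructor
      · positivity
      · exact h2
    · rw [act_pmL]; constructor
      · exact h1
      · have : 0 ≤ q⁻¹ * v.2 := by positivity
        simp only []; linarith

lemma invP_endsL {q : ℝ} (hq0 : 0 < q) (x : ℝ × ℝ) (hx1 : 0 < x.1) (hx2 : 0 ≤ x.2) :
    ∀ u : List Ltr, endsL u → 0 < (act (wp (pm q) u) x).2 := by
  intro u
  induction u with
  | nil => intro h; exact absurd h (by simp [endsL])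
  | cons c u ih =>
    intro h
    rw [wp_cons, act_mul]
    obtain ⟨h1, h2⟩ := invP hq0 x hx1 hx2 u
    cases u with
    | nil =>
      cases c
      · exact absurd h (by simp [endsL])
      · rw [wp_nil, act_one, act_pmL]
        have : 0 ≤ q⁻¹ * x.2 := by positivity
        simp only []; linarith
    | cons d u' =>
      rw [endsL_cons _ _ (by simp)] at h
      have h2' := ih h
      cases c
      · rw [act_pmR]; exact h2'
      · rw [act_pmL]
        have : 0 ≤ q⁻¹ * (act (wp (pm q) (d :: u')) x).2 := by positivity
        simp only []; linarith

/-- invariant for the negative letter system, flat-type (also holds for (1,0)) -/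
lemma invN_fl {q : ℝ} (hq0 : 0 < q) (hq1 : q ≤ 1) (x : ℝ × ℝ) (hx1 : 0 < x.1)
    (hx2 : x.2 ≤ (1 - q) * x.1) :
    ∀ u : List Ltr, 0 < (act (wp (nm q) u) x).1 ∧
      (act (wp (nm q) u) x).2 ≤ (1 - q) * (act (wp (nm q) u) x).1 := by
  intro u
  induction u with
  | nil => rw [wp_nil, act_one]; exact ⟨hx1, hx2⟩
  | cons c u ih =>
    obtain ⟨h1, h2⟩ := ih
    rw [wp_cons, act_mul]
    set v := act (wp (nm q) u) x with hv
    cases c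
    · rw [act_nmR]
      have hgrow : v.1 ≤ q⁻¹ * v.1 + -q⁻¹ * v.2 := by
        rw [← sub_nonneg]
        have : q⁻¹ * v.1 + -q⁻¹ * v.2 - v.1 = q⁻¹ * ((1 - q) * v.1 - v.2) := by
          field_simp; ring
        rw [this]
        have : 0 ≤ (1 - q) * v.1 - v.2 := by linarith
        positivity
      constructor
      · simp only []; linarith
      · simp only []
        calc v.2 ≤ (1 - q) * v.1 := h2
        _ ≤ (1 - q) * (q⁻¹ * v.1 + -q⁻¹ * v.2) := by
            apply mul_le_mul_of_nonneg_left hgrow (by linarith)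
    · rw [act_nmL]
      refine ⟨h1, ?_⟩
      simp only []
      nlinarith [mul_pos hq0 h1]

/-- invariant for the negative letter system, sharp-type -/
lemma invN_sh {q : ℝ} (hq0 : 0 < q) (hq1 : q ≤ 1) :
    ∀ u : List Ltr, 0 < (act (wp (nm q) u) ((1:ℝ), (0:ℝ))).1 ∧
      (act (wp (nm q) u) ((1:ℝ), (0:ℝ))).2 ≤ 0 ∧
      0 < q * (act (wp (nm q) u) ((1:ℝ), (0:ℝ))).1 + (1 - q) * (act (wp (nm q) u) ((1:ℝ), (0:ℝ))).2 := by
  intro u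
  induction u with
  | nil => rw [wp_nil, act_one]; exact ⟨one_pos, le_refl _, by simpa using hq0⟩
  | cons c u ih =>
    obtain ⟨h1, h2, h3⟩ := ih
    rw [wp_cons, act_mul]
    set v := act (wp (nm q) u) ((1:ℝ), (0:ℝ)) with hv
    have hq0' : 0 < q⁻¹ := by positivity
    cases c
    · rw [act_nmR]
      refine ⟨?_, h2, ?_⟩ <;> simp only []
      · nlinarith
      · have h4 : q * (q⁻¹ * v.1 + -q⁻¹ * v.2) = v.1 - v.2 := by
          field_simp
          ring
        rw [h4]
        nlinarith
    · rw [act_nmL]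
      refine ⟨h1, ?_, ?_⟩ <;> simp only []
      · nlinarith
      · have h4 : q * v.1 + (1 - q) * (-q * v.1 + q * v.2) = q * (q * v.1 + (1 - q) * v.2) := by
          ring
        rw [h4]
        positivity

lemma invN_endsL {q : ℝ} (hq0 : 0 < q) (hq1 : q ≤ 1) (x : ℝ × ℝ) (hx1 : 0 < x.1)
    (hx2 : x.2 ≤ (1 - q) * x.1) :
    ∀ u : List Ltr, endsL u → (act (wp (nm q) u) x).2 < 0 := by
  intro u
  induction u with
  | nil => intro h; exact absurd h (by simp [endsL])
  | cons c u ih =>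
    intro h
    rw [wp_cons, act_mul]
    obtain ⟨h1, h2⟩ := invN_fl hq0 hq1 x hx1 hx2 u
    cases u with
    | nil =>
      cases c
      · exact absurd h (by simp [endsL])
      · rw [wp_nil, act_one, act_nmL]
        simp only []
        nlinarith [mul_le_mul_of_nonneg_left hx2 hq0.le, mul_pos (mul_pos hq0 hq0) hx1]
    | cons d u' =>
      rw [endsL_cons _ _ (by simp)] at h
      have h2' := ih h
      cases c
      · rw [act_nmR]; exact h2'
      · rw [act_nmL]
        simp only []
        nlinarith

/-! ### master lemmas -/

lemma masterP {q : ℝ} (hq0 : 0 < q) (hq1 : q ≤ 1) :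
    ∀ N u v, u.length + v.length ≤ N → ltP u v →
      cross (act (wp (pm q) u) ((1:ℝ), (0:ℝ))) (act (wp (pm q) v) ((1:ℝ), 1 - q)) < 0 := by
  have hτ1 : (0:ℝ) < ((1:ℝ), 1 - q).1 := one_pos
  have hτ2 : (0:ℝ) ≤ ((1:ℝ), 1 - q).2 := by simp; linarith
  have hs1 : (0:ℝ) < ((1:ℝ), (0:ℝ)).1 := one_pos
  have hs2 : (0:ℝ) ≤ ((1:ℝ), (0:ℝ)).2 := le_refl _
  intro N
  induction N with
  | zero =>
    intro u v hlen hlt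
    have hu : u = [] := List.eq_nil_of_length_eq_zero (by omega)
    have hv : v = [] := List.eq_nil_of_length_eq_zero (by omega)
    subst hu; subst hv; exact absurd hlt (by simp [ltP])
  | succ N ih =>
    intro u v hlen hlt
    match u, v with
    | [], [] => exact absurd hlt (by simp [ltP])
    | [], (L :: v') => exact absurd hlt (by simp [ltP])
    | [], (R :: v') =>
      have hlt' : ltP [] v' := by simpa [ltP] using hlt
      have IH := ih [] v' (by simp at hlen ⊢; omega) hlt'
      rw [wp_cons, act_mul, wp_nil, act_one] at *
      rw [cross_inf] at IH ⊢
      rw [act_pmR]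
      exact IH
    | (R :: u'), [] =>
      have hlt' : ltP u' [] := by simpa [ltP] using hlt
      have IH := ih u' [] (by simp at hlen ⊢; omega) hlt'
      rw [wp_cons, act_mul, wp_nil, act_one] at *
      have hfix : ((1:ℝ), 1 - q) = act (pm q R) ((1:ℝ), 1 - q) := by
        rw [act_pmR]; exact Prod.ext (by ring) rfl
      rw [hfix, crossPR]
      exact mul_neg_of_pos_of_neg hq0 IH
    | (L :: u'), [] =>
      rw [wp_cons, act_mul, wp_nil, act_one, act_pmL]
      obtain ⟨h1, h2⟩ := invP hq0 _ hs1 hs2 u'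
      set w := act (wp (pm q) u') ((1:ℝ), (0:ℝ)) with hw
      simp only [cross]
      have e1 : 0 < q * w.1 := mul_pos hq0 h1
      have e2 : 0 ≤ q⁻¹ * w.2 := by positivity
      nlinarith
    | (R :: u'), (R :: v') =>
      have hlt' : ltP u' v' := by simpa [ltP] using hlt
      have IH := ih u' v' (by simp at hlen ⊢; omega) hlt'
      rw [wp_cons, wp_cons, act_mul, act_mul, crossPR]
      exact mul_neg_of_pos_of_neg hq0 IH
    | (L :: u'), (L :: v') =>
      have hlt' : ltP u' v' := by simpa [ltP] using hlt
      have IH := ih u' v' (by simp at hlen ⊢; omega) hlt'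
      rw [wp_cons, wp_cons, act_mul, act_mul, crossPL]
      exact mul_neg_of_pos_of_neg (by positivity) IH
    | (R :: u'), (L :: v') => exact absurd hlt (by simp [ltP])
    | (L :: u'), (R :: v') =>
      rw [wp_cons, wp_cons, act_mul, act_mul, act_pmL, act_pmR]
      obtain ⟨h1, h2⟩ := invP hq0 _ hs1 hs2 u'
      obtain ⟨h3, h4⟩ := invP hq0 _ hτ1 hτ2 v'
      set w := act (wp (pm q) u') ((1:ℝ), (0:ℝ)) with hw
      set z := act (wp (pm q) v') ((1:ℝ), 1 - q) with hz
      simp only [cross]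
      have key : w.1 * z.2 - (q * z.1 + z.2) * (w.1 + q⁻¹ * w.2)
          = -(q * z.1 * w.1) - (q * z.1) * (q⁻¹ * w.2) - z.2 * (q⁻¹ * w.2) := by ring
      rw [key]
      have e1 : 0 < q * z.1 * w.1 := by positivity
      have e2 : 0 ≤ (q * z.1) * (q⁻¹ * w.2) := by positivity
      have e3 : 0 ≤ z.2 * (q⁻¹ * w.2) := by positivity
      linarith

lemma masterN {q : ℝ} (hq0 : 0 < q) (hq1 : q ≤ 1) :
    ∀ N u v, u.length + v.length ≤ N → ltN u v →
      cross (act (wp (nm q) u) ((1:ℝ), (0:ℝ))) (act (wp (nm q) v) ((1:ℝ), 1 - q)) < 0 := by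
  have hτ1 : (0:ℝ) < ((1:ℝ), 1 - q).1 := one_pos
  have hτ2 : ((1:ℝ), 1 - q).2 ≤ (1 - q) * ((1:ℝ), 1 - q).1 := by simp
  intro N
  induction N with
  | zero =>
    intro u v hlen hlt
    have hu : u = [] := List.eq_nil_of_length_eq_zero (by omega)
    have hv : v = [] := List.eq_nil_of_length_eq_zero (by omega)
    subst hu; subst hv; exact absurd hlt (by simp [ltN])
  | succ N ih =>
    intro u v hlen hlt
    match u, v with
    | [], [] => exact absurd hlt (by simp [ltN])
    | [], (R :: v') =>
      have hlt' : ltN [] v' := by simpa [ltN] using hlt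
      have IH := ih [] v' (by simp at hlen ⊢; omega) hlt'
      rw [wp_cons, act_mul, wp_nil, act_one] at *
      rw [cross_inf] at IH ⊢
      rw [act_nmR]
      exact IH
    | [], (L :: v') =>
      rw [wp_cons, act_mul, wp_nil, act_one, act_nmL, cross_inf]
      obtain ⟨h1, h2⟩ := invN_fl hq0 hq1 _ hτ1 hτ2 v'
      set z := act (wp (nm q) v') ((1:ℝ), 1 - q) with hz
      simp only []
      nlinarith [mul_le_mul_of_nonneg_left h2 hq0.le, mul_pos (mul_pos hq0 hq0) h1]
    | (R :: u'), [] =>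
      have hlt' : ltN u' [] := by simpa [ltN] using hlt
      have IH := ih u' [] (by simp at hlen ⊢; omega) hlt'
      rw [wp_cons, act_mul, wp_nil, act_one] at *
      have hfix : ((1:ℝ), 1 - q) = act (nm q R) ((1:ℝ), 1 - q) := by
        rw [act_nmR]
        have h0 : q⁻¹ * 1 + -q⁻¹ * (1 - q) = 1 := by field_simp; ring
        exact Prod.ext h0.symm rfl
      rw [hfix, crossNR]
      exact mul_neg_of_pos_of_neg (by positivity) IH
    | (L :: u'), [] => exact absurd hlt (by simp [ltN])
    | (R :: u'), (R :: v') =>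
      have hlt' : ltN u' v' := by simpa [ltN] using hlt
      have IH := ih u' v' (by simp at hlen ⊢; omega) hlt'
      rw [wp_cons, wp_cons, act_mul, act_mul, crossNR]
      exact mul_neg_of_pos_of_neg (by positivity) IH
    | (L :: u'), (L :: v') =>
      have hlt' : ltN u' v' := by simpa [ltN] using hlt
      have IH := ih u' v' (by simp at hlen ⊢; omega) hlt'
      rw [wp_cons, wp_cons, act_mul, act_mul, crossNL]
      exact mul_neg_of_pos_of_neg hq0 IH
    | (L :: u'), (R :: v') => exact absurd hlt (by simp [ltN])
    | (R :: u'), (L :: v') =>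
      rw [wp_cons, wp_cons, act_mul, act_mul, act_nmR, act_nmL]
      obtain ⟨h1, h2, h3⟩ := invN_sh hq0 hq1 u'
      obtain ⟨h4, h5⟩ := invN_fl hq0 hq1 _ hτ1 hτ2 v'
      set w := act (wp (nm q) u') ((1:ℝ), (0:ℝ)) with hw
      set z := act (wp (nm q) v') ((1:ℝ), 1 - q) with hz
      simp only [cross]
      have key : (q⁻¹ * w.1 + -q⁻¹ * w.2) * (-q * z.1 + q * z.2) - z.1 * w.2
          = (w.1 - w.2) * (z.2 - (1 - q) * z.1)
            - z.1 * (q * w.1 + (1 - q) * w.2) := by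
        field_simp
        ring
      rw [key]
      have e1 : 0 ≤ (w.1 - w.2) * ((1 - q) * z.1 - z.2) := by
        apply mul_nonneg (by linarith) (by linarith)
      have e2 : 0 < z.1 * (q * w.1 + (1 - q) * w.2) := mul_pos h4 h3
      nlinarith

/-! ### suffix products of betaMat factors -/

noncomputable def tpr (q : ℝ) (a : ℕ → ℤ) (last : ℕ) (i : ℕ) : Matrix (Fin 2) (Fin 2) ℝ :=
  if last < i then 1
  else (if i % 2 = 1 then sig1 q ^ (-(a i)) else sig2 q ^ (a i)) * tpr q a last (i + 1)
termination_by last + 1 - i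
decreasing_by omega

lemma tpr_of_gt (q a) {last i : ℕ} (h : last < i) : tpr q a last i = 1 := by
  rw [tpr, if_pos h]

lemma tpr_of_le (q a) {last i : ℕ} (h : i ≤ last) :
    tpr q a last i
      = (if i % 2 = 1 then sig1 q ^ (-(a i)) else sig2 q ^ (a i)) * tpr q a last (i + 1) := by
  rw [tpr, if_neg (by omega)]

lemma betaMat_mul_tpr (q a) (last : ℕ) :
    ∀ d k, last - k = d → k ≤ last → betaMat q a k * tpr q a last (k + 1) = betaMat q a last := by
  intro d
  induction d with
  | zero =>
    intro k hk hk2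
    have : k = last := by omega
    subst this
    rw [tpr_of_gt q a (by omega), mul_one]
  | succ d ihd =>
    intro k hk hk2
    have hk3 : k + 1 ≤ last := by omega
    have step : betaMat q a (k + 1) = betaMat q a k *
        (if (k + 1) % 2 = 1 then sig1 q ^ (-(a (k + 1))) else sig2 q ^ (a (k + 1))) := rfl
    rw [tpr_of_le q a hk3, ← mul_assoc, ← step]
    exact ihd (k + 1) (by omega) hk3

lemma betaMat_eq_tpr (q a) (last : ℕ) (h : 1 ≤ last) : betaMat q a last = tpr q a last 1 := by
  have := betaMat_mul_tpr q a last (last - 0) 0 rfl (by omega)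
  simpa [betaMat] using this.symm

/-! ### word associated to an expansion -/

def wordFrom (s : ℕ → ℕ) (last : ℕ) (i : ℕ) : List Ltr :=
  if last < i then []
  else List.replicate (s i) (if i % 2 = 1 then R else L) ++ wordFrom s last (i + 1)
termination_by last + 1 - i
decreasing_by omega

lemma wordFrom_of_gt (s) {last i : ℕ} (h : last < i) : wordFrom s last i = [] := by
  rw [wordFrom, if_pos h]

lemma wordFrom_of_le (s) {last i : ℕ} (h : i ≤ last) :
    wordFrom s last i
      = List.replicate (s i) (if i % 2 = 1 then R else L) ++ wordFrom s last (i + 1) := by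
  rw [wordFrom, if_neg (by omega)]

lemma endsL_wordFrom (s : ℕ → ℕ) (n : ℕ) (hn : 1 ≤ n) (hs : 1 ≤ s (2 * n)) :
    ∀ d i, 2 * n - i = d → 1 ≤ i → i ≤ 2 * n → endsL (wordFrom s (2 * n) i) := by
  intro d
  induction d with
  | zero =>
    intro i hd h1 h2
    have : i = 2 * n := by omega
    subst this
    rw [wordFrom_of_le s (le_refl _), wordFrom_of_gt s (by omega), List.append_nil,
      if_neg (by omega)]
    exact endsL_replicate _ hs
  | succ d ihd =>
    intro i hd h1 h2
    rw [wordFrom_of_le s (by omega)]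
    exact endsL_append _ _ (ihd (i + 1) (by omega) (by omega) (by omega))

/-! ### factor lemmas: zpow factors as nat powers of letter matrices -/

lemma one_fin_two' : (1 : Matrix (Fin 2) (Fin 2) ℝ) = !![1, 0; 0, 1] := by
  rw [Matrix.one_fin_two]

lemma sig1_mul_pmR (q : ℝ) (hq : q ≠ 0) : sig1 q * pm q R = 1 := by
  rw [sig1, pm, Matrix.mul_fin_two, one_fin_two']
  congr 1 <;> field_simp <;> simp [hq]

lemma sig2_mul_nmL (q : ℝ) (hq : q ≠ 0) : sig2 q * nm q L = 1 := by
  rw [sig2, nm, Matrix.mul_fin_two, one_fin_two']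
  congr 1 <;> field_simp <;> simp [hq]

lemma facP_odd (q : ℝ) (hq : q ≠ 0) (z : ℤ) (hz : 0 ≤ z) :
    sig1 q ^ (-z) = pm q R ^ z.toNat := by
  obtain ⟨s, rfl⟩ := Int.eq_ofNat_of_zero_le hz
  rw [Matrix.zpow_neg_natCast, ← Matrix.inv_pow', Matrix.inv_eq_right_inv (sig1_mul_pmR q hq)]
  simp

lemma facP_even (q : ℝ) (z : ℤ) (hz : 0 ≤ z) :
    sig2 q ^ z = pm q L ^ z.toNat := by
  obtain ⟨s, rfl⟩ := Int.eq_ofNat_of_zero_le hz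
  rw [zpow_natCast, Int.toNat_natCast]
  rfl

lemma facN_odd (q : ℝ) (z : ℤ) (hz : z ≤ 0) :
    sig1 q ^ (-z) = nm q R ^ (-z).toNat := by
  have h0 : -z = (((-z).toNat : ℕ) : ℤ) := by omega
  rw [h0, zpow_natCast]
  rfl

lemma facN_even (q : ℝ) (hq : q ≠ 0) (z : ℤ) (hz : z ≤ 0) :
    sig2 q ^ z = nm q L ^ (-z).toNat := by
  set s := (-z).toNat with hs
  have h0 : z = -(s : ℤ) := by omega
  rw [h0, Matrix.zpow_neg_natCast, ← Matrix.inv_pow',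
    Matrix.inv_eq_right_inv (sig2_mul_nmL q hq)]

/-! ### the word bridge -/

lemma tpr_eq_wp_pos (q : ℝ) (hq : q ≠ 0) (a : ℕ → ℤ) (n : ℕ)
    (hb : ∀ i, 1 ≤ i → i ≤ 2 * n → 0 ≤ a i) :
    ∀ d i, 2 * n + 1 - i = d → 1 ≤ i →
      tpr q a (2 * n) i = wp (pm q) (wordFrom (fun j => (a j).toNat) (2 * n) i) := by
  intro d
  induction d with
  | zero =>
    intro i hd h1
    rw [tpr_of_gt q a (by omega), wordFrom_of_gt _ (by omega), wp_nil]
  | succ d ihd =>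
    intro i hd h1
    rcases Nat.lt_or_ge (2 * n) i with h | h
    · rw [tpr_of_gt q a h, wordFrom_of_gt _ h, wp_nil]
    · rw [tpr_of_le q a h, wordFrom_of_le _ h, wp_append, wp_replicate,
        ihd (i + 1) (by omega) (by omega)]
      congr 1
      rcases Nat.decEq (i % 2) 1 with h2 | h2
      · rw [if_neg h2, if_neg h2, facP_even q _ (hb i h1 h)]
      · rw [if_pos h2, if_pos h2, facP_odd q hq _ (hb i h1 h)]

lemma tpr_eq_wp_neg (q : ℝ) (hq : q ≠ 0) (a : ℕ → ℤ) (n : ℕ)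
    (hb : ∀ i, 1 ≤ i → i ≤ 2 * n → a i ≤ 0) :
    ∀ d i, 2 * n + 1 - i = d → 1 ≤ i →
      tpr q a (2 * n) i = wp (nm q) (wordFrom (fun j => (-(a j)).toNat) (2 * n) i) := by
  intro d
  induction d with
  | zero =>
    intro i hd h1
    rw [tpr_of_gt q a (by omega), wordFrom_of_gt _ (by omega), wp_nil]
  | succ d ihd =>
    intro i hd h1
    rcases Nat.lt_or_ge (2 * n) i with h | h
    · rw [tpr_of_gt q a h, wordFrom_of_gt _ h, wp_nil]
    · rw [tpr_of_le q a h, wordFrom_of_le _ h, wp_append, wp_replicate,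
        ihd (i + 1) (by omega) (by omega)]
      congr 1
      rcases Nat.decEq (i % 2) 1 with h2 | h2
      · rw [if_neg h2, if_neg h2, facN_even q hq _ (hb i h1 h)]
      · rw [if_pos h2, if_pos h2, facN_odd q _ (hb i h1 h)]

/-! ### cfVal basic lemmas -/

lemma cfVal_of_le (a : ℕ → ℤ) {last i : ℕ} (h : last ≤ i) : cfVal a last i = (a i : ℚ) := by
  rw [cfVal, if_pos h]

lemma cfVal_of_lt (a : ℕ → ℤ) {last i : ℕ} (h : i < last) :
    cfVal a last i = (a i : ℚ) + 1 / cfVal a last (i + 1) := by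
  rw [cfVal, if_neg (by omega)]

lemma cfP_tail (a : ℕ → ℤ) (n : ℕ) (hb : ∀ i, 2 ≤ i → i ≤ 2 * n → 1 ≤ a i) :
    ∀ d i, 2 * n - i = d → 2 ≤ i → i ≤ 2 * n → 1 ≤ cfVal a (2 * n) i := by
  intro d
  induction d with
  | zero =>
    intro i hd h1 h2
    rw [cfVal_of_le a (by omega)]
    exact_mod_cast hb i h1 h2
  | succ d ihd =>
    intro i hd h1 h2
    rw [cfVal_of_lt a (by omega)]
    have ht := ihd (i + 1) (by omega) (by omega) (by omega)
    have h3 : (0:ℚ) < 1 / cfVal a (2 * n) (i + 1) := by positivity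
    have h4 : (1:ℚ) ≤ (a i : ℚ) := by exact_mod_cast hb i h1 h2
    linarith

lemma cfP_head (a : ℕ → ℤ) (n : ℕ) (hn : 1 ≤ n) (hb1 : 0 ≤ a 1)
    (hb : ∀ i, 2 ≤ i → i ≤ 2 * n → 1 ≤ a i) : 0 < cfVal a (2 * n) 1 := by
  rw [cfVal_of_lt a (by omega)]
  have ht := cfP_tail a n hb (2 * n - 2) 2 rfl (le_refl _) (by omega)
  have h3 : (0:ℚ) < 1 / cfVal a (2 * n) 2 := by positivity
  have h4 : (0:ℚ) ≤ (a 1 : ℚ) := by exact_mod_cast hb1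
  linarith

lemma cfN_tail (a : ℕ → ℤ) (n : ℕ) (hb : ∀ i, 2 ≤ i → i ≤ 2 * n → a i ≤ -1) :
    ∀ d i, 2 * n - i = d → 2 ≤ i → i ≤ 2 * n → cfVal a (2 * n) i ≤ -1 := by
  intro d
  induction d with
  | zero =>
    intro i hd h1 h2
    rw [cfVal_of_le a (by omega)]
    exact_mod_cast hb i h1 h2
  | succ d ihd =>
    intro i hd h1 h2
    rw [cfVal_of_lt a (by omega)]
    have ht := ihd (i + 1) (by omega) (by omega) (by omega)
    have h3 : 1 / cfVal a (2 * n) (i + 1) < 0 := by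
      apply div_neg_of_pos_of_neg one_pos
      linarith
    have h4 : (a i : ℚ) ≤ -1 := by exact_mod_cast hb i h1 h2
    linarith

lemma cfN_head (a : ℕ → ℤ) (n : ℕ) (hn : 1 ≤ n) (hb1 : a 1 ≤ 0)
    (hb : ∀ i, 2 ≤ i → i ≤ 2 * n → a i ≤ -1) : cfVal a (2 * n) 1 < 0 := by
  rw [cfVal_of_lt a (by omega)]
  have ht := cfN_tail a n hb (2 * n - 2) 2 rfl (le_refl _) (by omega)
  have h3 : 1 / cfVal a (2 * n) 2 < 0 := by
    apply div_neg_of_pos_of_neg one_pos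
    linarith
  have h4 : (a 1 : ℚ) ≤ 0 := by exact_mod_cast hb1
  linarith

lemma cf_tail_ne (a : ℕ → ℤ) (n : ℕ)
    (hb : (∀ i, 2 ≤ i → i ≤ 2 * n → 1 ≤ a i) ∨ (∀ i, 2 ≤ i → i ≤ 2 * n → a i ≤ -1)) :
    ∀ i, 2 ≤ i → i ≤ 2 * n → cfVal a (2 * n) i ≠ 0 := by
  intro i h1 h2
  rcases hb with hb | hb
  · have := cfP_tail a n hb (2 * n - i) i rfl h1 h2
    intro h; rw [h] at this; norm_num at this
  · have := cfN_tail a n hb (2 * n - i) i rfl h1 h2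
    intro h; rw [h] at this; norm_num at this

/-! ### q = 1 power actions -/

lemma act_pow_pmR1 (s : ℕ) (v : ℝ × ℝ) :
    act (pm 1 R ^ s) v = (v.1 + (s : ℝ) * v.2, v.2) := by
  induction s with
  | zero => rw [pow_zero, act_one]; simp
  | succ s ih =>
    rw [pow_succ', act_mul, ih, act_pmR]
    push_cast
    exact Prod.ext (by ring) rfl

lemma act_pow_pmL1 (s : ℕ) (v : ℝ × ℝ) :
    act (pm 1 L ^ s) v = (v.1, (s : ℝ) * v.1 + v.2) := by
  induction s with
  | zero => rw [pow_zero, act_one]; simp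
  | succ s ih =>
    rw [pow_succ', act_mul, ih, act_pmL]
    push_cast
    exact Prod.ext rfl (by norm_num; ring)

lemma act_pow_nmR1 (s : ℕ) (v : ℝ × ℝ) :
    act (nm 1 R ^ s) v = (v.1 - (s : ℝ) * v.2, v.2) := by
  induction s with
  | zero => rw [pow_zero, act_one]; simp
  | succ s ih =>
    rw [pow_succ', act_mul, ih, act_nmR]
    push_cast
    exact Prod.ext (by norm_num; ring) rfl

lemma act_pow_nmL1 (s : ℕ) (v : ℝ × ℝ) :
    act (nm 1 L ^ s) v = (v.1, -(s : ℝ) * v.1 + v.2) := by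
  induction s with
  | zero => rw [pow_zero, act_one]; simp
  | succ s ih =>
    rw [pow_succ', act_mul, ih, act_nmL]
    push_cast
    exact Prod.ext rfl (by norm_num; ring)

lemma act_fac_odd (z : ℤ) (v : ℝ × ℝ) :
    act (sig1 1 ^ (-z)) v = (v.1 + (z : ℝ) * v.2, v.2) := by
  rcases le_total 0 z with hz | hz
  · rw [facP_odd 1 one_ne_zero z hz, act_pow_pmR1]
    have : ((z.toNat : ℝ)) = (z : ℝ) := by exact_mod_cast Int.toNat_of_nonneg hz
    rw [this]
  · rw [facN_odd 1 z hz, act_pow_nmR1]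
    have : (((-z).toNat : ℝ)) = -(z : ℝ) := by
      have := Int.toNat_of_nonneg (by omega : (0:ℤ) ≤ -z)
      exact_mod_cast this
    rw [this]
    exact Prod.ext (by ring) rfl

lemma act_fac_even (z : ℤ) (v : ℝ × ℝ) :
    act (sig2 1 ^ z) v = (v.1, (z : ℝ) * v.1 + v.2) := by
  rcases le_total 0 z with hz | hz
  · rw [facP_even 1 z hz, act_pow_pmL1]
    have : ((z.toNat : ℝ)) = (z : ℝ) := by exact_mod_cast Int.toNat_of_nonneg hz
    rw [this]
  · rw [facN_even 1 one_ne_zero z hz, act_pow_nmL1]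
    have : (((-z).toNat : ℝ)) = -(z : ℝ) := by
      have := Int.toNat_of_nonneg (by omega : (0:ℤ) ≤ -z)
      exact_mod_cast this
    rw [this]
    exact Prod.ext rfl (by ring)

/-! ### the value bridge at q = 1 -/

lemma tprVal (a : ℕ → ℤ) (n : ℕ)
    (hne : ∀ i, 2 ≤ i → i ≤ 2 * n → cfVal a (2 * n) i ≠ 0) :
    ∀ d i, 2 * n - i = d → 1 ≤ i → i ≤ 2 * n → ∃ c : ℝ, c ≠ 0 ∧
      act (tpr 1 a (2 * n) i) ((1:ℝ), (0:ℝ))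
        = if i % 2 = 1 then ((c * ((cfVal a (2 * n) i : ℚ) : ℝ), c))
          else ((c, c * ((cfVal a (2 * n) i : ℚ) : ℝ))) := by
  intro d
  induction d with
  | zero =>
    intro i hd h1 h2
    have hi : i = 2 * n := by omega
    refine ⟨1, one_ne_zero, ?_⟩
    rw [tpr_of_le 1 a (by omega), tpr_of_gt 1 a (by omega), mul_one, hi,
      if_neg (by omega), if_neg (by omega), act_fac_even, cfVal_of_le a (le_refl _)]
    simp
  | succ d ihd =>
    intro i hd h1 h2
    have hlt : i < 2 * n := by omega
    obtain ⟨c, hc, hv⟩ := ihd (i + 1) (by omega) (by omega) (by omega)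
    have hcf : ((cfVal a (2 * n) (i + 1) : ℚ) : ℝ) ≠ 0 := by
      exact_mod_cast hne (i + 1) (by omega) (by omega)
    rw [tpr_of_le 1 a (by omega), act_mul, hv]
    rcases Nat.decEq (i % 2) 1 with h2' | h2'
    · -- i even, i+1 odd
      refine ⟨c * ((cfVal a (2 * n) (i + 1) : ℚ) : ℝ), mul_ne_zero hc hcf, ?_⟩
      rw [if_neg h2', if_pos (by omega), if_neg h2', act_fac_even, cfVal_of_lt a hlt]
      push_cast
      refine Prod.ext rfl ?_
      simp only []
      field_simp
    · -- i odd, i+1 even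
      refine ⟨c * ((cfVal a (2 * n) (i + 1) : ℚ) : ℝ), mul_ne_zero hc hcf, ?_⟩
      rw [if_pos h2', if_neg (by omega), if_pos h2', act_fac_odd, cfVal_of_lt a hlt]
      push_cast
      refine Prod.ext ?_ rfl
      simp only []
      field_simp
      ring

/-! ### value extraction -/

lemma act_inf (M : Matrix (Fin 2) (Fin 2) ℝ) : act M ((1:ℝ), (0:ℝ)) = (M 0 0, M 1 0) := by
  simp [act]

lemma sharpVal_eq (q : ℝ) (n : ℕ) (a : ℕ → ℤ) :
    sharpVal q n a = (act (betaMat q a (2 * n)) ((1:ℝ), (0:ℝ))).1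
      / (act (betaMat q a (2 * n)) ((1:ℝ), (0:ℝ))).2 := by
  rw [sharpVal, mobiusInf, act_inf]

lemma flatVal_eq (q : ℝ) (hq1 : q < 1) (n : ℕ) (a : ℕ → ℤ) :
    flatVal q n a = (act (betaMat q a (2 * n)) ((1:ℝ), 1 - q)).1
      / (act (betaMat q a (2 * n)) ((1:ℝ), 1 - q)).2 := by
  have h1q : (0:ℝ) < 1 - q := by linarith
  rw [flatVal, mobiusAct]
  set M := betaMat q a (2 * n)
  have e : ∀ A B : ℝ, A * (1 / (1 - q)) + B = (A + B * (1 - q)) * (1 / (1 - q)) := by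
    intro A B
    field_simp
  rw [e (M 0 0) (M 0 1), e (M 1 0) (M 1 1),
    mul_div_mul_right _ _ (by positivity : (1:ℝ) / (1 - q) ≠ 0)]
  simp [act]

lemma val_lt (v w : ℝ × ℝ) (h : 0 < v.2 * w.2) (hc : cross v w < 0) :
    v.1 / v.2 < w.1 / w.2 := by
  have hv : v.2 ≠ 0 := by intro h0; rw [h0] at h; simp at h
  rcases lt_or_gt_of_ne hv with hv2 | hv2
  · have hw2 : w.2 < 0 := by nlinarith
    have e : v.1 / v.2 = -v.1 / -v.2 := by rw [neg_div_neg_eq]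
    have e2 : w.1 / w.2 = -w.1 / -w.2 := by rw [neg_div_neg_eq]
    rw [e, e2, div_lt_div_iff₀ (by linarith) (by linarith)]
    simp only [cross] at hc
    nlinarith
  · have hw2 : 0 < w.2 := by nlinarith
    rw [div_lt_div_iff₀ hv2 hw2]
    simp only [cross] at hc
    nlinarith

lemma val_lt_mixed (v w : ℝ × ℝ) (hv : v.2 < 0) (hw : 0 < w.2) (hc : 0 < cross v w) :
    v.1 / v.2 < w.1 / w.2 := by
  have e : v.1 / v.2 = -v.1 / -v.2 := by rw [neg_div_neg_eq]
  rw [e, div_lt_div_iff₀ (by linarith) hw]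
  simp only [cross] at hc
  nlinarith

/-! ### packaged bridges -/

lemma beta_wp_pos (q : ℝ) (hq : q ≠ 0) (a : ℕ → ℤ) (n : ℕ)
    (hb0 : ∀ i, 1 ≤ i → i ≤ 2 * n → 0 ≤ a i) (hn : 1 ≤ n) :
    betaMat q a (2 * n) = wp (pm q) (wordFrom (fun j => (a j).toNat) (2 * n) 1) := by
  rw [betaMat_eq_tpr q a (2 * n) (by omega)]
  exact tpr_eq_wp_pos q hq a n hb0 (2 * n) 1 (by omega) le_rfl

lemma beta_wp_neg (q : ℝ) (hq : q ≠ 0) (a : ℕ → ℤ) (n : ℕ)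
    (hb0 : ∀ i, 1 ≤ i → i ≤ 2 * n → a i ≤ 0) (hn : 1 ≤ n) :
    betaMat q a (2 * n) = wp (nm q) (wordFrom (fun j => (-(a j)).toNat) (2 * n) 1) := by
  rw [betaMat_eq_tpr q a (2 * n) (by omega)]
  exact tpr_eq_wp_neg q hq a n hb0 (2 * n) 1 (by omega) le_rfl

/-- value vector at q = 1, index 1 -/
lemma betaVal1 (a : ℕ → ℤ) (n : ℕ) (hn : 1 ≤ n)
    (hb : (∀ i, 2 ≤ i → i ≤ 2 * n → 1 ≤ a i) ∨ (∀ i, 2 ≤ i → i ≤ 2 * n → a i ≤ -1)) :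
    ∃ c : ℝ, c ≠ 0 ∧ act (betaMat 1 a (2 * n)) ((1:ℝ), (0:ℝ))
      = (c * ((cfVal a (2 * n) 1 : ℚ) : ℝ), c) := by
  obtain ⟨c, hc, hv⟩ := tprVal a n (cf_tail_ne a n hb) (2 * n - 1) 1 rfl le_rfl (by omega)
  rw [if_pos (by norm_num : (1:ℕ) % 2 = 1)] at hv
  exact ⟨c, hc, by rw [betaMat_eq_tpr 1 a (2 * n) (by omega)]; exact hv⟩

/-! ### main positive-form lemmas -/

section main
variable {q : ℝ}

lemma flat_lt_sharp_gen (hq0 : 0 < q) (hq1 : q < 1) (n : ℕ) (a : ℕ → ℤ)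
    (m : Ltr → Matrix (Fin 2) (Fin 2) ℝ) (u : List Ltr)
    (hW : betaMat q a (2 * n) = wp m u)
    (hm : ∀ c : Ltr, ∃ d : ℝ, 0 < d ∧ ∀ v w, cross (act (m c) v) (act (m c) w) = d * cross v w)
    (hsgn : 0 < (act (wp m u) ((1:ℝ), (0:ℝ))).2 * (act (wp m u) ((1:ℝ), 1 - q)).2) :
    flatVal q n a < sharpVal q n a := by
  rw [flatVal_eq q hq1, sharpVal_eq, hW]
  apply val_lt _ _ (by nlinarith)
  obtain ⟨d, hd, hdw⟩ := cross_wp m hm u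
  rw [hdw]
  have : cross ((1:ℝ), 1 - q) ((1:ℝ), (0:ℝ)) = -(1 - q) := by simp [cross]
  rw [this]
  nlinarith

lemma flat_lt_sharp_pos (hq0 : 0 < q) (hq1 : q < 1) (n : ℕ) (a : ℕ → ℤ) (hn : 1 ≤ n)
    (hb1 : 0 ≤ a 1) (hb : ∀ i, 2 ≤ i → i ≤ 2 * n → 1 ≤ a i) :
    flatVal q n a < sharpVal q n a := by
  set u := wordFrom (fun j => (a j).toNat) (2 * n) 1 with hu
  have hb0 : ∀ i, 1 ≤ i → i ≤ 2 * n → 0 ≤ a i := by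
    intro i h1 h2
    rcases Nat.lt_or_ge i 2 with h | h
    · have : i = 1 := by omega
      rw [this]; exact hb1
    · linarith [hb i h h2]
  have hW := beta_wp_pos q hq0.ne' a n hb0 hn
  rw [← hu] at hW
  have hend : endsL u :=
    endsL_wordFrom _ n hn (by have := hb (2 * n) (by omega) le_rfl; omega)
      (2 * n - 1) 1 rfl le_rfl (by omega)
  refine flat_lt_sharp_gen hq0 hq1 n a (pm q) u hW (cross_pm q hq0) ?_
  have h1 := invP_endsL hq0 ((1:ℝ), (0:ℝ)) one_pos (le_refl _) u hend
  have h2 := invP_endsL hq0 ((1:ℝ), 1 - q) one_pos (by simp; linarith) u hend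
  exact mul_pos h1 h2

lemma flat_lt_sharp_neg (hq0 : 0 < q) (hq1 : q < 1) (n : ℕ) (a : ℕ → ℤ) (hn : 1 ≤ n)
    (hb1 : a 1 ≤ 0) (hb : ∀ i, 2 ≤ i → i ≤ 2 * n → a i ≤ -1) :
    flatVal q n a < sharpVal q n a := by
  set u := wordFrom (fun j => (-(a j)).toNat) (2 * n) 1 with hu
  have hb0 : ∀ i, 1 ≤ i → i ≤ 2 * n → a i ≤ 0 := by
    intro i h1 h2
    rcases Nat.lt_or_ge i 2 with h | h
    · have : i = 1 := by omega
      rw [this]; exact hb1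
    · linarith [hb i h h2]
  have hW := beta_wp_neg q hq0.ne' a n hb0 hn
  rw [← hu] at hW
  have hend : endsL u :=
    endsL_wordFrom _ n hn (by have := hb (2 * n) (by omega) le_rfl; omega)
      (2 * n - 1) 1 rfl le_rfl (by omega)
  refine flat_lt_sharp_gen hq0 hq1 n a (nm q) u hW (cross_nm q hq0) ?_
  have h1 := invN_endsL hq0 hq1.le ((1:ℝ), (0:ℝ)) one_pos (by simp; linarith) u hend
  have h2 := invN_endsL hq0 hq1.le ((1:ℝ), 1 - q) one_pos (by simp) u hend
  exact mul_pos_of_neg_of_neg h1 h2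

/-- the key middle inequality, positive forms -/
lemma sharp_lt_flat_pos (hq0 : 0 < q) (hq1 : q < 1)
    (x y : ℚ) (hxy : x < y) (nx : ℕ) (ax : ℕ → ℤ) (ny : ℕ) (ay : ℕ → ℤ)
    (hnx : 1 ≤ nx) (hbx1 : 0 ≤ ax 1) (hbx : ∀ i, 2 ≤ i → i ≤ 2 * nx → 1 ≤ ax i)
    (hcx : cfVal ax (2 * nx) 1 = x)
    (hny : 1 ≤ ny) (hby1 : 0 ≤ ay 1) (hby : ∀ i, 2 ≤ i → i ≤ 2 * ny → 1 ≤ ay i)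
    (hcy : cfVal ay (2 * ny) 1 = y) :
    sharpVal q nx ax < flatVal q ny ay := by
  set u := wordFrom (fun j => (ax j).toNat) (2 * nx) 1 with hu
  set v := wordFrom (fun j => (ay j).toNat) (2 * ny) 1 with hv
  have hbx0 : ∀ i, 1 ≤ i → i ≤ 2 * nx → 0 ≤ ax i := by
    intro i h1 h2
    rcases Nat.lt_or_ge i 2 with h | h
    · have : i = 1 := by omega
      rw [this]; exact hbx1
    · linarith [hbx i h h2]
  have hby0 : ∀ i, 1 ≤ i → i ≤ 2 * ny → 0 ≤ ay i := by
    intro i h1 h2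
    rcases Nat.lt_or_ge i 2 with h | h
    · have : i = 1 := by omega
      rw [this]; exact hby1
    · linarith [hby i h h2]
  have hWx := beta_wp_pos q hq0.ne' ax nx hbx0 hnx
  have hWy := beta_wp_pos q hq0.ne' ay ny hby0 hny
  have hWx1 := beta_wp_pos 1 one_ne_zero ax nx hbx0 hnx
  have hWy1 := beta_wp_pos 1 one_ne_zero ay ny hby0 hny
  have hendu : endsL u :=
    endsL_wordFrom _ nx hnx (by have := hbx (2 * nx) (by omega) le_rfl; omega)
      (2 * nx - 1) 1 rfl le_rfl (by omega)
  have hendv : endsL v :=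
    endsL_wordFrom _ ny hny (by have := hby (2 * ny) (by omega) le_rfl; omega)
      (2 * ny - 1) 1 rfl le_rfl (by omega)
  -- value vectors at q = 1
  obtain ⟨c, hc, hvx⟩ := betaVal1 ax nx hnx (Or.inl hbx)
  obtain ⟨d, hd, hvy⟩ := betaVal1 ay ny hny (Or.inl hby)
  rw [hWx1, hcx] at hvx
  rw [hWy1, hcy] at hvy
  rw [← hu] at hvx hWx
  rw [← hv] at hvy hWy
  have hcpos : 0 < c := by
    have := invP_endsL one_pos ((1:ℝ), (0:ℝ)) one_pos (le_refl _) u hendu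
    rw [hvx] at this
    exact this
  have hdpos : 0 < d := by
    have := invP_endsL one_pos ((1:ℝ), (0:ℝ)) one_pos (le_refl _) v hendv
    rw [hvy] at this
    exact this
  have hxyR : ((x : ℚ) : ℝ) < ((y : ℚ) : ℝ) := by exact_mod_cast hxy
  -- establish ltP u v
  have hlt : ltP u v := by
    rcases triP (u.length + v.length) u v le_rfl (Or.inr hendu) (Or.inr hendv) with h | h | h
    · exact h
    · exfalso
      have hm := masterP (q := 1) one_pos le_rfl (v.length + u.length) v u le_rfl h
      have hτ : ((1:ℝ), 1 - (1:ℝ)) = ((1:ℝ), (0:ℝ)) := by norm_num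
      rw [hτ, hvx, hvy] at hm
      simp only [cross] at hm
      nlinarith [mul_lt_mul_of_pos_left hxyR (mul_pos hcpos hdpos)]
    · exfalso
      have heq := hvx.symm.trans (h ▸ hvy)
      have h1 : c = d := congrArg Prod.snd heq
      have h2 : c * ((x : ℚ) : ℝ) = d * ((y : ℚ) : ℝ) := congrArg Prod.fst heq
      rw [← h1] at h2
      have h3 : ((x : ℚ) : ℝ) = ((y : ℚ) : ℝ) := mul_left_cancel₀ hc h2
      linarith
  have hm := masterP hq0 hq1.le (u.length + v.length) u v le_rfl hlt
  rw [sharpVal_eq, flatVal_eq q hq1, hWx, hWy]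
  apply val_lt _ _ _ hm
  have h1 := invP_endsL hq0 ((1:ℝ), (0:ℝ)) one_pos (le_refl _) u hendu
  have h2 := invP_endsL hq0 ((1:ℝ), 1 - q) one_pos (by simp; linarith) v hendv
  exact mul_pos h1 h2

/-- the key middle inequality, negative forms -/
lemma sharp_lt_flat_neg (hq0 : 0 < q) (hq1 : q < 1)
    (x y : ℚ) (hxy : x < y) (nx : ℕ) (ax : ℕ → ℤ) (ny : ℕ) (ay : ℕ → ℤ)
    (hnx : 1 ≤ nx) (hbx1 : ax 1 ≤ 0) (hbx : ∀ i, 2 ≤ i → i ≤ 2 * nx → ax i ≤ -1)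
    (hcx : cfVal ax (2 * nx) 1 = x)
    (hny : 1 ≤ ny) (hby1 : ay 1 ≤ 0) (hby : ∀ i, 2 ≤ i → i ≤ 2 * ny → ay i ≤ -1)
    (hcy : cfVal ay (2 * ny) 1 = y) :
    sharpVal q nx ax < flatVal q ny ay := by
  set u := wordFrom (fun j => (-(ax j)).toNat) (2 * nx) 1 with hu
  set v := wordFrom (fun j => (-(ay j)).toNat) (2 * ny) 1 with hv
  have hbx0 : ∀ i, 1 ≤ i → i ≤ 2 * nx → ax i ≤ 0 := by
    intro i h1 h2
    rcases Nat.lt_or_ge i 2 with h | h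
    · have : i = 1 := by omega
      rw [this]; exact hbx1
    · linarith [hbx i h h2]
  have hby0 : ∀ i, 1 ≤ i → i ≤ 2 * ny → ay i ≤ 0 := by
    intro i h1 h2
    rcases Nat.lt_or_ge i 2 with h | h
    · have : i = 1 := by omega
      rw [this]; exact hby1
    · linarith [hby i h h2]
  have hWx := beta_wp_neg q hq0.ne' ax nx hbx0 hnx
  have hWy := beta_wp_neg q hq0.ne' ay ny hby0 hny
  have hWx1 := beta_wp_neg 1 one_ne_zero ax nx hbx0 hnx
  have hWy1 := beta_wp_neg 1 one_ne_zero ay ny hby0 hny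
  have hendu : endsL u :=
    endsL_wordFrom _ nx hnx (by have := hbx (2 * nx) (by omega) le_rfl; omega)
      (2 * nx - 1) 1 rfl le_rfl (by omega)
  have hendv : endsL v :=
    endsL_wordFrom _ ny hny (by have := hby (2 * ny) (by omega) le_rfl; omega)
      (2 * ny - 1) 1 rfl le_rfl (by omega)
  obtain ⟨c, hc, hvx⟩ := betaVal1 ax nx hnx (Or.inr hbx)
  obtain ⟨d, hd, hvy⟩ := betaVal1 ay ny hny (Or.inr hby)
  rw [hWx1, hcx] at hvx
  rw [hWy1, hcy] at hvy
  rw [← hu] at hvx hWx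
  rw [← hv] at hvy hWy
  have hcneg : c < 0 := by
    have := invN_endsL (q := 1) one_pos le_rfl ((1:ℝ), (0:ℝ)) one_pos (by norm_num) u hendu
    rw [hvx] at this
    exact this
  have hdneg : d < 0 := by
    have := invN_endsL (q := 1) one_pos le_rfl ((1:ℝ), (0:ℝ)) one_pos (by norm_num) v hendv
    rw [hvy] at this
    exact this
  have hxyR : ((x : ℚ) : ℝ) < ((y : ℚ) : ℝ) := by exact_mod_cast hxy
  have hlt : ltN u v := by
    rcases triN (u.length + v.length) u v le_rfl (Or.inr hendu) (Or.inr hendv) with h | h | h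
    · exact h
    · exfalso
      have hm := masterN (q := 1) one_pos le_rfl (v.length + u.length) v u le_rfl h
      have hτ : ((1:ℝ), 1 - (1:ℝ)) = ((1:ℝ), (0:ℝ)) := by norm_num
      rw [hτ, hvx, hvy] at hm
      simp only [cross] at hm
      nlinarith [mul_lt_mul_of_pos_left hxyR (mul_pos_of_neg_of_neg hcneg hdneg)]
    · exfalso
      have heq := hvx.symm.trans (h ▸ hvy)
      have h1 : c = d := congrArg Prod.snd heq
      have h2 : c * ((x : ℚ) : ℝ) = d * ((y : ℚ) : ℝ) := congrArg Prod.fst heq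
      rw [← h1] at h2
      have h3 : ((x : ℚ) : ℝ) = ((y : ℚ) : ℝ) := mul_left_cancel₀ hc h2
      linarith
  have hm := masterN hq0 hq1.le (u.length + v.length) u v le_rfl hlt
  rw [sharpVal_eq, flatVal_eq q hq1, hWx, hWy]
  apply val_lt _ _ _ hm
  have h1 := invN_endsL hq0 hq1.le ((1:ℝ), (0:ℝ)) one_pos (by norm_num; linarith) u hendu
  have h2 := invN_endsL hq0 hq1.le ((1:ℝ), 1 - q) one_pos (by simp) v hendv
  exact mul_pos_of_neg_of_neg h1 h2

/-! ### sign lemmas and the zero convention -/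

lemma flat_pos_pos (hq0 : 0 < q) (hq1 : q < 1) (n : ℕ) (a : ℕ → ℤ) (hn : 1 ≤ n)
    (hb1 : 0 ≤ a 1) (hb : ∀ i, 2 ≤ i → i ≤ 2 * n → 1 ≤ a i) :
    0 < flatVal q n a := by
  set u := wordFrom (fun j => (a j).toNat) (2 * n) 1 with hu
  have hb0 : ∀ i, 1 ≤ i → i ≤ 2 * n → 0 ≤ a i := by
    intro i h1 h2
    rcases Nat.lt_or_ge i 2 with h | h
    · have : i = 1 := by omega
      rw [this]; exact hb1
    · linarith [hb i h h2]
  have hW := beta_wp_pos q hq0.ne' a n hb0 hn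
  rw [← hu] at hW
  have hend : endsL u :=
    endsL_wordFrom _ n hn (by have := hb (2 * n) (by omega) le_rfl; omega)
      (2 * n - 1) 1 rfl le_rfl (by omega)
  rw [flatVal_eq q hq1, hW]
  have h1 := (invP hq0 ((1:ℝ), 1 - q) one_pos (by simp; linarith) u).1
  have h2 := invP_endsL hq0 ((1:ℝ), 1 - q) one_pos (by simp; linarith) u hend
  exact div_pos h1 h2

lemma sharp_neg_neg (hq0 : 0 < q) (hq1 : q < 1) (n : ℕ) (a : ℕ → ℤ) (hn : 1 ≤ n)
    (hb1 : a 1 ≤ 0) (hb : ∀ i, 2 ≤ i → i ≤ 2 * n → a i ≤ -1) :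
    sharpVal q n a < 0 := by
  set u := wordFrom (fun j => (-(a j)).toNat) (2 * n) 1 with hu
  have hb0 : ∀ i, 1 ≤ i → i ≤ 2 * n → a i ≤ 0 := by
    intro i h1 h2
    rcases Nat.lt_or_ge i 2 with h | h
    · have : i = 1 := by omega
      rw [this]; exact hb1
    · linarith [hb i h h2]
  have hW := beta_wp_neg q hq0.ne' a n hb0 hn
  rw [← hu] at hW
  have hend : endsL u :=
    endsL_wordFrom _ n hn (by have := hb (2 * n) (by omega) le_rfl; omega)
      (2 * n - 1) 1 rfl le_rfl (by omega)
  rw [sharpVal_eq, hW]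
  have h1 := (invN_fl hq0 hq1.le ((1:ℝ), (0:ℝ)) one_pos (by norm_num; linarith) u).1
  have h2 := invN_endsL hq0 hq1.le ((1:ℝ), (0:ℝ)) one_pos (by norm_num; linarith) u hend
  exact div_neg_of_pos_of_neg h1 h2

/-- sharp of a negative-form rational is below −(1−q)/q -/
lemma sharp_neg_lt_bound (hq0 : 0 < q) (hq1 : q < 1) (n : ℕ) (a : ℕ → ℤ) (hn : 1 ≤ n)
    (hb1 : a 1 ≤ 0) (hb : ∀ i, 2 ≤ i → i ≤ 2 * n → a i ≤ -1) :
    sharpVal q n a < -((1 - q) / q) := by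
  set u := wordFrom (fun j => (-(a j)).toNat) (2 * n) 1 with hu
  have hb0 : ∀ i, 1 ≤ i → i ≤ 2 * n → a i ≤ 0 := by
    intro i h1 h2
    rcases Nat.lt_or_ge i 2 with h | h
    · have : i = 1 := by omega
      rw [this]; exact hb1
    · linarith [hb i h h2]
  have hW := beta_wp_neg q hq0.ne' a n hb0 hn
  rw [← hu] at hW
  have hend : endsL u :=
    endsL_wordFrom _ n hn (by have := hb (2 * n) (by omega) le_rfl; omega)
      (2 * n - 1) 1 rfl le_rfl (by omega)
  rw [sharpVal_eq, hW]
  obtain ⟨hp, -, hinv⟩ := invN_sh hq0 hq1.le u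
  have hr := invN_endsL hq0 hq1.le ((1:ℝ), (0:ℝ)) one_pos (by norm_num; linarith) u hend
  set w := act (wp (nm q) u) ((1:ℝ), (0:ℝ)) with hwdef
  have hw2 : w.2 ≠ 0 := ne_of_lt hr
  have key : w.1 / w.2 + (1 - q) / q = (q * w.1 + (1 - q) * w.2) / (q * w.2) := by
    field_simp
  have h2 : (q * w.1 + (1 - q) * w.2) / (q * w.2) < 0 :=
    div_neg_of_pos_of_neg hinv (by nlinarith)
  linarith [key ▸ h2]

/-- explicit matrix for the expansion of 0 -/
lemma betaZero (a : ℕ → ℤ) (ha1 : a 1 = -1) (ha2 : a 2 = 1) :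
    betaMat q a 2 = sig1 q * sig2 q := by
  have e2 : betaMat q a 2 = betaMat q a 1 *
      (if (2 % 2 : ℕ) = 1 then sig1 q ^ (-(a 2)) else sig2 q ^ (a 2)) := rfl
  have e1 : betaMat q a 1 = betaMat q a 0 *
      (if (1 % 2 : ℕ) = 1 then sig1 q ^ (-(a 1)) else sig2 q ^ (a 1)) := rfl
  have e0 : betaMat q a 0 = 1 := rfl
  rw [e2, e1, e0, if_neg (by norm_num : ¬ (2 % 2 : ℕ) = 1),
    if_pos (by norm_num : (1 % 2 : ℕ) = 1), ha1, ha2, one_mul]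
  norm_num [zpow_one]

lemma sharp_zero (hq0 : 0 < q) (a : ℕ → ℤ) (ha1 : a 1 = -1) (ha2 : a 2 = 1) :
    sharpVal q 1 a = 0 := by
  rw [sharpVal_eq]
  have h2 : (2 : ℕ) = 2 * 1 := by norm_num
  rw [← h2, betaZero a ha1 ha2]
  rw [act_mul]
  have e1 : sig2 q = pm q L := rfl
  have e2 : sig1 q = nm q R := rfl
  rw [e1, e2, act_pmL, act_nmR]
  simp only []
  norm_num

lemma flat_zero (hq0 : 0 < q) (hq1 : q < 1) (a : ℕ → ℤ) (ha1 : a 1 = -1) (ha2 : a 2 = 1) :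
    flatVal q 1 a = -((1 - q) / q) := by
  rw [flatVal_eq q hq1]
  have h2 : (2 : ℕ) = 2 * 1 := by norm_num
  rw [← h2, betaZero a ha1 ha2]
  rw [act_mul]
  have e1 : sig2 q = pm q L := rfl
  have e2 : sig1 q = nm q R := rfl
  rw [e1, e2, act_pmL, act_nmR]
  simp only []
  have hq : q ≠ 0 := hq0.ne'
  field_simp
  ring

end main

end QD

/-- order interleaving of left and right q-deformed rationals:
for 0 < q < 1 and rationals x < y (with even continued fraction expansion data
(nx, ax) and (ny, ay) respectively), [x]♭_q < [x]♯_q < [y]♭_q < [y]♯_q. -/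
theorem qdeform_order_interleaving (q : ℝ) (hq0 : 0 < q) (hq1 : q < 1)
    (x y : ℚ) (hxy : x < y)
    (nx : ℕ) (ax : ℕ → ℤ) (hx : IsECFExp nx ax x)
    (ny : ℕ) (ay : ℕ → ℤ) (hy : IsECFExp ny ay y) :
    flatVal q nx ax < sharpVal q nx ax ∧
    sharpVal q nx ax < flatVal q ny ay ∧
    flatVal q ny ay < sharpVal q ny ay := by
  have hq1' : (0:ℝ) < 1 - q := by linarith
  have hzero_flat_lt_sharp : ∀ (n : ℕ) (a : ℕ → ℤ), n = 1 → a 1 = -1 → a 2 = 1 →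
      flatVal q n a < sharpVal q n a := by
    intro n a hn ha1 ha2
    subst hn
    rw [QD.flat_zero hq0 hq1 a ha1 ha2, QD.sharp_zero hq0 a ha1 ha2]
    have : 0 < (1 - q) / q := div_pos hq1' hq0
    linarith
  rcases hx with ⟨hx0, ⟨hnx, hformx⟩, hcx⟩ | ⟨hx0, hnx1, hax1, hax2⟩
  · rcases hy with ⟨hy0, ⟨hny, hformy⟩, hcy⟩ | ⟨hy0, hny1, hay1, hay2⟩
    · -- both nonzero
      rcases hformx with ⟨hbx1, hbx⟩ | ⟨hbx1, hbx⟩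
      · -- x positive form
        have hxpos : 0 < x := hcx ▸ QD.cfP_head ax nx hnx hbx1 hbx
        rcases hformy with ⟨hby1, hby⟩ | ⟨hby1, hby⟩
        · exact ⟨QD.flat_lt_sharp_pos hq0 hq1 nx ax hnx hbx1 hbx,
            QD.sharp_lt_flat_pos hq0 hq1 x y hxy nx ax ny ay hnx hbx1 hbx hcx hny hby1 hby hcy,
            QD.flat_lt_sharp_pos hq0 hq1 ny ay hny hby1 hby⟩
        · have hyneg : y < 0 := hcy ▸ QD.cfN_head ay ny hny hby1 hby
          exact absurd hxy (by linarith)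
      · -- x negative form
        have hxneg : x < 0 := hcx ▸ QD.cfN_head ax nx hnx hbx1 hbx
        rcases hformy with ⟨hby1, hby⟩ | ⟨hby1, hby⟩
        · -- y positive form
          exact ⟨QD.flat_lt_sharp_neg hq0 hq1 nx ax hnx hbx1 hbx,
            lt_trans (QD.sharp_neg_neg hq0 hq1 nx ax hnx hbx1 hbx)
              (QD.flat_pos_pos hq0 hq1 ny ay hny hby1 hby),
            QD.flat_lt_sharp_pos hq0 hq1 ny ay hny hby1 hby⟩
        · exact ⟨QD.flat_lt_sharp_neg hq0 hq1 nx ax hnx hbx1 hbx,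
            QD.sharp_lt_flat_neg hq0 hq1 x y hxy nx ax ny ay hnx hbx1 hbx hcx hny hby1 hby hcy,
            QD.flat_lt_sharp_neg hq0 hq1 ny ay hny hby1 hby⟩
    · -- y = 0
      subst hy0
      rcases hformx with ⟨hbx1, hbx⟩ | ⟨hbx1, hbx⟩
      · have hxpos : 0 < x := hcx ▸ QD.cfP_head ax nx hnx hbx1 hbx
        exact absurd hxy (by linarith)
      · subst hny1
        refine ⟨QD.flat_lt_sharp_neg hq0 hq1 nx ax hnx hbx1 hbx, ?_,
          hzero_flat_lt_sharp 1 ay rfl hay1 hay2⟩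
        rw [QD.flat_zero hq0 hq1 ay hay1 hay2]
        exact QD.sharp_neg_lt_bound hq0 hq1 nx ax hnx hbx1 hbx
  · -- x = 0
    subst hx0
    subst hnx1
    rcases hy with ⟨hy0, ⟨hny, hformy⟩, hcy⟩ | ⟨hy0, hny1, hay1, hay2⟩
    · rcases hformy with ⟨hby1, hby⟩ | ⟨hby1, hby⟩
      · refine ⟨hzero_flat_lt_sharp 1 ax rfl hax1 hax2, ?_,
          QD.flat_lt_sharp_pos hq0 hq1 ny ay hny hby1 hby⟩
        rw [QD.sharp_zero hq0 ax hax1 hax2]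
        exact QD.flat_pos_pos hq0 hq1 ny ay hny hby1 hby
      · have hyneg : y < 0 := hcy ▸ QD.cfN_head ay ny hny hby1 hby
        exact absurd hxy (by linarith)
    · subst hy0
      exact absurd hxy (lt_irrefl 0)
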